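/- The derivations ∂₁ = 2z·∂/∂y - x²·∂/∂z and ∂₂ = 3t²·∂/∂y - x²·∂/∂t define locally nilpotent derivations on the coordinate ring ℂ[X] = ℂ[x,y,z,t]/(x²y+z²+x+t³), i.e. each annihilates P = x²y+z²+x+t³ and is locally nilpotent, and Ker(∂₁) ∩ Ker(∂₂) ⊇ ℂ[x]. -/
import Mathlib

open MvPolynomial

/-- ∂₁ = 2z ∂/∂y - x² ∂/∂z on ℂ[x,y,z,t]. -/
noncomputable def d1 : Derivation ℂ (MvPolynomial (Fin 4) ℂ) (MvPolynomial (Fin 4) ℂ) :=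
  mkDerivation ℂ ![0, 2 * X 2, -(X 0 ^ 2), 0]

/-- ∂₂ = 3t² ∂/∂y - x² ∂/∂t on ℂ[x,y,z,t]. -/
noncomputable def d2 : Derivation ℂ (MvPolynomial (Fin 4) ℂ) (MvPolynomial (Fin 4) ℂ) :=
  mkDerivation ℂ ![0, 3 * X 3 ^ 2, 0, -(X 0 ^ 2)]

/-- P = x²y + z² + x + t³ -/
noncomputable def KRP : MvPolynomial (Fin 4) ℂ :=
  X 0 ^ 2 * X 1 + X 2 ^ 2 + X 0 + X 3 ^ 3

section Aux

abbrev R4 := MvPolynomial (Fin 4) ℂ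

lemma iter_zero (D : Derivation ℂ R4 R4) (n : ℕ) : (fun g => D g)^[n] 0 = 0 := by
  induction n with
  | zero => rfl
  | succ n ih => rw [Function.iterate_succ_apply, map_zero, ih]

lemma iter_add (D : Derivation ℂ R4 R4) (n : ℕ) (a b : R4) :
    (fun g => D g)^[n] (a + b) = (fun g => D g)^[n] a + (fun g => D g)^[n] b := by
  induction n generalizing a b with
  | zero => rfl
  | succ n ih => rw [Function.iterate_succ_apply, map_add]; exact ih _ _

lemma iter_mono (D : Derivation ℂ R4 R4) {m n : ℕ} (h : m ≤ n) {a : R4}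
    (ha : (fun g => D g)^[m] a = 0) : (fun g => D g)^[n] a = 0 := by
  obtain ⟨k, rfl⟩ := Nat.exists_eq_add_of_le h
  rw [Nat.add_comm, Function.iterate_add_apply, ha, iter_zero]

lemma iter_mul (D : Derivation ℂ R4 R4) :
    ∀ k m n (a b : R4), m + n = k → (fun g => D g)^[m] a = 0 →
      (fun g => D g)^[n] b = 0 → (fun g => D g)^[k] (a * b) = 0 := by
  intro k
  induction k with
  | zero =>
    intro m n a b hk ha hb
    obtain ⟨rfl, rfl⟩ := Nat.add_eq_zero.mp hk
    simp only [Function.iterate_zero, id] at ha hb ⊢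
    rw [ha, zero_mul]
  | succ k ih =>
    intro m n a b hk ha hb
    match m, n with
    | 0, n =>
      simp only [Function.iterate_zero, id] at ha
      rw [ha, zero_mul, iter_zero]
    | m, 0 =>
      simp only [Function.iterate_zero, id] at hb
      rw [hb, mul_zero, iter_zero]
    | m' + 1, n' + 1 =>
      rw [Function.iterate_succ_apply]
      show (fun g => D g)^[k] (D (a * b)) = 0
      rw [Derivation.leibniz, smul_eq_mul, smul_eq_mul, iter_add]
      rw [ih (m' + 1) n' a (D b) (by omega) ha (by
            rw [← Function.iterate_succ_apply]; exact hb),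
          ih (n' + 1) m' b (D a) (by omega) hb (by
            rw [← Function.iterate_succ_apply]; exact ha), add_zero]

noncomputable def LN (D : Derivation ℂ R4 R4) : Subalgebra ℂ R4 where
  carrier := {f | ∃ n, (fun g => D g)^[n] f = 0}
  mul_mem' := by
    rintro a b ⟨m, hm⟩ ⟨n, hn⟩
    exact ⟨m + n, iter_mul D (m + n) m n a b rfl hm hn⟩
  add_mem' := by
    rintro a b ⟨m, hm⟩ ⟨n, hn⟩
    exact ⟨max m n, by
      rw [iter_add, iter_mono D (le_max_left m n) hm,
        iter_mono D (le_max_right m n) hn, add_zero]⟩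
  algebraMap_mem' := fun c => ⟨1, by
    simpa using D.map_algebraMap c⟩

lemma LN_all (D : Derivation ℂ R4 R4) (hX : ∀ i, X i ∈ LN D) (f : R4) :
    ∃ n, (fun g => D g)^[n] f = 0 := by
  have : f ∈ LN D := by
    have htop : Algebra.adjoin ℂ (Set.range (X : Fin 4 → R4)) = ⊤ :=
      MvPolynomial.adjoin_range_X
    have : f ∈ Algebra.adjoin ℂ (Set.range (X : Fin 4 → R4)) := htop ▸ Algebra.mem_top
    refine Algebra.adjoin_le ?_ this
    rintro _ ⟨i, rfl⟩
    exact hX i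
  exact this

lemma d1_X0 : d1 (X 0) = 0 := by simp [d1, mkDerivation_X]
lemma d1_X1 : d1 (X 1) = 2 * X 2 := by simp [d1, mkDerivation_X]
lemma d1_X2 : d1 (X 2) = -(X 0 ^ 2) := by simp [d1, mkDerivation_X]
lemma d1_X3 : d1 (X 3) = 0 := by simp [d1, mkDerivation_X]
lemma d2_X0 : d2 (X 0) = 0 := by simp [d2, mkDerivation_X]
lemma d2_X1 : d2 (X 1) = 3 * X 3 ^ 2 := by simp [d2, mkDerivation_X]
lemma d2_X2 : d2 (X 2) = 0 := by simp [d2, mkDerivation_X]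
lemma d2_X3 : d2 (X 3) = -(X 0 ^ 2) := by simp [d2, mkDerivation_X]

end Aux

theorem stmt12 :
    d1 KRP = 0 ∧ d2 KRP = 0 ∧
      (∀ f : MvPolynomial (Fin 4) ℂ, ∃ n : ℕ, (fun g => d1 g)^[n] f = 0) ∧
      (∀ f : MvPolynomial (Fin 4) ℂ, ∃ n : ℕ, (fun g => d2 g)^[n] f = 0) ∧
      (∀ p : Polynomial ℂ,
        d1 (Polynomial.aeval (X 0 : MvPolynomial (Fin 4) ℂ) p) = 0 ∧
        d2 (Polynomial.aeval (X 0 : MvPolynomial (Fin 4) ℂ) p) = 0) := by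
  have hx2 : d1 (X 0 ^ 2) = 0 := by
    rw [Derivation.leibniz_pow, d1_X0]; simp
  have hx2' : d2 (X 0 ^ 2) = 0 := by
    rw [Derivation.leibniz_pow, d2_X0]; simp
  have h2 : d1 (2 : R4) = 0 := by
    rw [show (2 : R4) = ((2 : ℕ) : R4) by norm_num]; exact d1.map_natCast 2
  have h3 : d2 (3 : R4) = 0 := by
    rw [show (3 : R4) = ((3 : ℕ) : R4) by norm_num]; exact d2.map_natCast 3
  have h2' : d2 (2 : R4) = 0 := by
    rw [show (2 : R4) = ((2 : ℕ) : R4) by norm_num]; exact d2.map_natCast 2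
  refine ⟨?_, ?_, ?_, ?_, ?_⟩
  · rw [KRP, map_add, map_add, map_add, Derivation.leibniz,
      Derivation.leibniz_pow, Derivation.leibniz_pow, Derivation.leibniz_pow,
      d1_X0, d1_X1, d1_X2, d1_X3]
    simp only [smul_eq_mul, nsmul_eq_mul, smul_zero]
    push_cast
    ring
  · rw [KRP, map_add, map_add, map_add, Derivation.leibniz,
      Derivation.leibniz_pow, Derivation.leibniz_pow, Derivation.leibniz_pow,
      d2_X0, d2_X1, d2_X2, d2_X3]
    simp only [smul_eq_mul, nsmul_eq_mul, smul_zero]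
    push_cast
    ring
  · refine LN_all d1 (fun i => ?_)
    fin_cases i
    · exact ⟨1, by simpa using d1_X0⟩
    · refine ⟨3, ?_⟩
      show d1 (d1 (d1 (X 1))) = 0
      rw [d1_X1, Derivation.leibniz, d1_X2, h2]
      simp only [smul_eq_mul, mul_zero, add_zero, zero_mul, zero_add]
      rw [show (2 : R4) * -(X 0 ^ 2) = -(2 * X 0 ^ 2) by ring, map_neg,
        Derivation.leibniz, h2, hx2]
      simp
    · exact ⟨2, by
        show d1 (d1 (X 2)) = 0
        rw [d1_X2, map_neg, hx2, neg_zero]⟩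
    · exact ⟨1, by simpa using d1_X3⟩
  · refine LN_all d2 (fun i => ?_)
    fin_cases i
    · exact ⟨1, by simpa using d2_X0⟩
    · refine ⟨4, ?_⟩
      have hb : d2 (3 * X 3 ^ 2) = -(3 * (2 * (X 3 * X 0 ^ 2))) := by
        rw [Derivation.leibniz, h3, Derivation.leibniz_pow, d2_X3]
        simp only [smul_eq_mul, smul_zero, mul_zero, add_zero, pow_one,
          nsmul_eq_mul, Nat.cast_ofNat]
        ring
      have hc : d2 (-(3 * (2 * (X 3 * X 0 ^ 2)))) = 3 * (2 * (X 0 ^ 2 * X 0 ^ 2)) := by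
        rw [map_neg, Derivation.leibniz, h3, Derivation.leibniz, h2',
          Derivation.leibniz, d2_X3, hx2']
        simp only [smul_eq_mul, mul_zero, add_zero, zero_add, zero_mul, smul_zero]
        ring
      have hd : d2 (3 * (2 * (X 0 ^ 2 * X 0 ^ 2))) = 0 := by
        rw [Derivation.leibniz, h3, Derivation.leibniz, h2', Derivation.leibniz, hx2']
        simp
      show d2 (d2 (d2 (d2 (X 1)))) = 0
      rw [d2_X1, hb, hc, hd]
    · exact ⟨1, by simp [d2_X2]⟩
    · exact ⟨2, by
        show d2 (d2 (X 3)) = 0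
        rw [d2_X3, map_neg, hx2', neg_zero]⟩
  · intro p
    induction p using Polynomial.induction_on' with
    | add p q hp hq =>
      rw [map_add, map_add, map_add, hp.1, hp.2, hq.1, hq.2]
      simp
    | monomial n a =>
      constructor <;>
      · rw [Polynomial.aeval_monomial, Derivation.leibniz, Derivation.leibniz_pow]
        simp [d1_X0, d2_X0, Derivation.map_algebraMap]
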